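/- Let λ be the hyperbolic area measure on the upper half-plane and U = {(x,y) : -1/2 < x < 1/2, y > 2|x|}. Then for x, x' ∈ ℝ, λ(U∩(U+(x'-x))) restricted to any vertical truncation at y above 0 converges, and λ((U+x) ∩ (U+x')) = log(1/min(|x-x'|, 1)). -/

import Mathlib

open Real MeasureTheory Filter

/-- The hyperbolic area measure `dx dy / y²`. -/
noncomputable def hypMeasure : Measure (ℝ × ℝ) :=
  volume.withDensity (fun p => ENNReal.ofReal (1 / p.2 ^ 2))

/-- The infinite cone region `U`. -/
def coneU : Set (ℝ × ℝ) :=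
  {p | -(1/2) < p.1 ∧ p.1 < 1/2 ∧ 2 * |p.1| < p.2}

/-- Horizontal translate of a planar set. -/
def htrans (A : Set (ℝ × ℝ)) (t : ℝ) : Set (ℝ × ℝ) := {p | (p.1 - t, p.2) ∈ A}

lemma hyp_mem_htrans (t x1 y : ℝ) :
    (x1, y) ∈ htrans coneU t ↔ |x1 - t| < min y 1 / 2 := by
  simp only [htrans, coneU, Set.mem_setOf_eq]
  constructor
  · rintro ⟨h1, h2, h3⟩
    have h4 : |x1 - t| < 1/2 := abs_lt.2 ⟨by linarith, h2⟩
    rw [lt_div_iff₀ (by norm_num : (0:ℝ) < 2), lt_min_iff]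
    constructor <;> nlinarith [abs_nonneg (x1 - t)]
  · intro h
    have hy : |x1 - t| < y / 2 := h.trans_le (by gcongr; exact min_le_left _ _)
    have h1 : |x1 - t| < 1 / 2 := h.trans_le (by gcongr; exact min_le_right _ _)
    obtain ⟨ha, hb⟩ := abs_lt.1 h1
    exact ⟨by linarith, hb, by linarith⟩

lemma hyp_isOpen_coneU : IsOpen coneU := by
  have : coneU = ({p : ℝ × ℝ | -(1/2) < p.1} ∩ {p | p.1 < 1/2}) ∩ {p | 2 * |p.1| < p.2} := by
    ext p; simp [coneU, and_assoc]
  rw [this]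
  exact ((isOpen_lt continuous_const continuous_fst).inter
      (isOpen_lt continuous_fst continuous_const)).inter
    (isOpen_lt (continuous_const.mul continuous_fst.abs) continuous_snd)

lemma hyp_isOpen_htrans (t : ℝ) : IsOpen (htrans coneU t) :=
  hyp_isOpen_coneU.preimage ((continuous_fst.sub continuous_const).prodMk continuous_snd)

/-- For `x ≠ x'`, the truncations of `λ((U+x) ∩ (U+x'))` at height `ε` converge as `ε → 0⁺`,
and `λ((U+x) ∩ (U+x')) = log (1 / min (|x-x'|) 1)`. -/
theorem hyp_area_cone_covariance (x x' : ℝ) (hxx : x ≠ x') :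
    Tendsto (fun ε : ℝ =>
        hypMeasure ((htrans coneU x ∩ htrans coneU x') ∩ {p | ε < p.2}))
      (nhdsWithin 0 (Set.Ioi 0))
      (nhds (hypMeasure (htrans coneU x ∩ htrans coneU x'))) ∧
    hypMeasure (htrans coneU x ∩ htrans coneU x')
      = ENNReal.ofReal (Real.log (1 / min |x - x'| 1)) := by
  set d : ℝ := |x - x'| with hd_def
  have hd : 0 < d := abs_pos.mpr (sub_ne_zero.mpr hxx)
  set S : Set (ℝ × ℝ) := htrans coneU x ∩ htrans coneU x' with hS_def
  have hSm : MeasurableSet S :=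
    ((hyp_isOpen_htrans x).inter (hyp_isOpen_htrans x')).measurableSet
  -- triangle inequality : d ≤ |x1 - x| + |x1 - x'|
  have htri : ∀ x1 : ℝ, d ≤ |x1 - x| + |x1 - x'| := by
    intro x1
    have h := abs_add_le (x - x1) (x1 - x')
    have h2 : x - x1 + (x1 - x') = x - x' := by ring
    rw [h2] at h
    rw [hd_def, abs_sub_comm x1 x]
    exact h
  -- S lies above height d
  have hsub : S ⊆ {p : ℝ × ℝ | d < p.2} := by
    rintro ⟨x1, y⟩ ⟨hA, hB⟩
    rw [hyp_mem_htrans] at hA hB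
    have hm : min y 1 ≤ y := min_le_left _ _
    have := htri x1
    simp only [Set.mem_setOf_eq]
    linarith
  -- slice description of S
  have hslice : ∀ y : ℝ, {x1 : ℝ | (x1, y) ∈ S} =
      Set.Ioo (max x x' - min y 1 / 2) (min x x' + min y 1 / 2) := by
    intro y
    ext x1
    simp only [Set.mem_setOf_eq, hS_def, Set.mem_inter_iff, hyp_mem_htrans, Set.mem_Ioo]
    set m := min y 1 / 2 with hm_def
    constructor
    · rintro ⟨hA, hB⟩
      obtain ⟨a1, a2⟩ := abs_lt.1 hA
      obtain ⟨b1, b2⟩ := abs_lt.1 hB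
      constructor
      · exact sub_lt_iff_lt_add.mpr (max_lt (by linarith) (by linarith))
      · have := lt_min (show x1 - m < x by linarith) (show x1 - m < x' by linarith)
        linarith
    · rintro ⟨h1, h2⟩
      refine ⟨abs_lt.mpr ⟨?_, ?_⟩, abs_lt.mpr ⟨?_, ?_⟩⟩ <;>
        · have e1 := le_max_left x x'
          have e2 := le_max_right x x'
          have e3 := min_le_left x x'
          have e4 := min_le_right x x'
          linarith
  -- the measure as an integral over heights
  have hg : Measurable fun p : ℝ × ℝ => ENNReal.ofReal (1 / p.2 ^ 2) :=
    (measurable_const.div (measurable_snd.pow_const 2)).ennreal_ofReal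
  have hμ : hypMeasure S = ∫⁻ y : ℝ, ENNReal.ofReal (1 / y ^ 2 * (min y 1 - d)) ∂volume := by
    rw [hypMeasure, withDensity_apply _ hSm, ← lintegral_indicator hSm _,
      Measure.volume_eq_prod, lintegral_prod_symm' _ (hg.indicator hSm)]
    refine lintegral_congr fun y => ?_
    have hind : ∀ x1 : ℝ, S.indicator (fun p : ℝ × ℝ => ENNReal.ofReal (1 / p.2 ^ 2)) (x1, y)
        = (Set.Ioo (max x x' - min y 1 / 2) (min x x' + min y 1 / 2)).indicator
            (fun _ => ENNReal.ofReal (1 / y ^ 2)) x1 := by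
      intro x1
      have hiff := Set.ext_iff.mp (hslice y) x1
      by_cases h : (x1, y) ∈ S
      · rw [Set.indicator_of_mem h, Set.indicator_of_mem (hiff.mp h)]
      · rw [Set.indicator_of_notMem h, Set.indicator_of_notMem (fun hh => h (hiff.mpr hh))]
    rw [lintegral_congr hind, lintegral_indicator_const measurableSet_Ioo, Real.volume_Ioo,
      ← ENNReal.ofReal_mul (by positivity : (0:ℝ) ≤ 1 / y ^ 2)]
    congr 1
    have habs : max x x' - min x x' = d :=
      (max_sub_min_eq_abs x x').trans (abs_sub_comm x' x)
    rw [← habs]; ring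
  -- value of the measure
  have hval : hypMeasure S = ENNReal.ofReal (Real.log (1 / min d 1)) := by
    rcases lt_or_ge d 1 with hd1 | hd1
    · -- case d < 1
      set h : ℝ → ℝ := fun y => 1 / y ^ 2 * (min y 1 - d) with hh_def
      have hcont : ContinuousOn h (Set.Icc d 1) := by
        apply ContinuousOn.mul
        · exact continuousOn_const.div (continuous_pow 2).continuousOn
            (fun y hy => pow_ne_zero _ (ne_of_gt (lt_of_lt_of_le hd hy.1)))
        · exact ((continuous_id.min continuous_const).sub continuous_const).continuousOn
      have hI1 : IntegrableOn h (Set.Ioc d 1) :=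
        (hcont.integrableOn_Icc).mono_set Set.Ioc_subset_Icc_self
      have heq2 : Set.EqOn (fun y : ℝ => (1 - d) * y ^ (-2 : ℝ)) h (Set.Ioi 1) := by
        intro y hy
        have hy0 : (0:ℝ) < y := lt_trans one_pos hy
        simp only [hh_def]
        rw [min_eq_right (le_of_lt hy),
          show y ^ (-2 : ℝ) = (y ^ 2)⁻¹ by
            rw [Real.rpow_neg hy0.le, ← Real.rpow_natCast y 2]; norm_num]
        ring
      have hI2' : IntegrableOn (fun y : ℝ => (1 - d) * y ^ (-2 : ℝ)) (Set.Ioi 1) :=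
        (integrableOn_Ioi_rpow_of_lt (by norm_num) one_pos).const_mul (1 - d)
      have hI2 : IntegrableOn h (Set.Ioi 1) :=
        hI2'.congr_fun heq2 measurableSet_Ioi
      have hI : IntegrableOn h (Set.Ioi d) := by
        rw [← Set.Ioc_union_Ioi_eq_Ioi hd1.le]
        exact hI1.union hI2
      have hval1 : ∫ y in Set.Ioc d 1, h y = d - 1 - Real.log d := by
        rw [← intervalIntegral.integral_of_le hd1.le,
          intervalIntegral.integral_congr (g := fun y : ℝ => 1 / y - d / y ^ 2) ?_]
        · rw [intervalIntegral.integral_eq_sub_of_hasDerivAt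
            (f := fun y : ℝ => Real.log y + d * y⁻¹) ?_ ?_]
          · rw [Real.log_one, mul_inv_cancel₀ hd.ne']
            ring
          · intro y hy
            rw [Set.uIcc_of_le hd1.le] at hy
            have hy0 : y ≠ 0 := (hd.trans_le hy.1).ne'
            have H := (Real.hasDerivAt_log hy0).add ((hasDerivAt_inv hy0).const_mul d)
            convert H using 1
            · rfl
            · ring
          · apply ContinuousOn.intervalIntegrable
            rw [Set.uIcc_of_le hd1.le]
            apply ContinuousOn.sub
            · exact continuousOn_const.div continuousOn_id
                (fun y hy => (hd.trans_le hy.1).ne')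
            · exact continuousOn_const.div (continuous_pow 2).continuousOn
                (fun y hy => pow_ne_zero _ (hd.trans_le hy.1).ne')
        · intro y hy
          rw [Set.uIcc_of_le hd1.le] at hy
          have hy0 : y ≠ 0 := (hd.trans_le hy.1).ne'
          simp only [hh_def]
          rw [min_eq_left hy.2]
          field_simp
      have hval2 : ∫ y in Set.Ioi 1, h y = 1 - d := by
        rw [← setIntegral_congr_fun measurableSet_Ioi heq2, MeasureTheory.integral_const_mul,
          integral_Ioi_rpow_of_lt (by norm_num) one_pos]
        norm_num
      have hvalI : ∫ y in Set.Ioi d, h y = Real.log (1 / d) := by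
        rw [← Set.Ioc_union_Ioi_eq_Ioi hd1.le,
          setIntegral_union (Set.Ioc_disjoint_Ioi le_rfl) measurableSet_Ioi hI1 hI2,
          hval1, hval2, one_div, Real.log_inv]
        ring
      have hnn : 0 ≤ᵐ[volume.restrict (Set.Ioi d)] h := by
        filter_upwards [ae_restrict_mem measurableSet_Ioi] with y hy
        have hy0 : (0:ℝ) < y := hd.trans hy
        exact mul_nonneg (by positivity) (sub_nonneg.mpr (le_min hy.le hd1.le))
      have hmeas : Measurable fun y : ℝ => ENNReal.ofReal (h y) := by
        apply Measurable.ennreal_ofReal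
        exact (measurable_const.div (measurable_id.pow_const 2)).mul
          ((measurable_id.min measurable_const).sub measurable_const)
      have hzero : ∫⁻ y in Set.Iic d, ENNReal.ofReal (h y) ∂volume = 0 := by
        have hz : ∀ y ∈ Set.Iic d, ENNReal.ofReal (h y) = 0 := by
          intro y hy
          rw [ENNReal.ofReal_eq_zero]
          have h1 : (0:ℝ) ≤ 1 / y ^ 2 := by positivity
          have h2 : min y 1 - d ≤ 0 := by
            have := min_le_left y 1
            simp only [Set.mem_Iic] at hy
            linarith
          exact mul_nonpos_of_nonneg_of_nonpos h1 h2
        rw [setLIntegral_congr_fun measurableSet_Iic hz]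
        simp
      calc hypMeasure S = ∫⁻ y : ℝ, ENNReal.ofReal (h y) ∂volume := hμ
        _ = (∫⁻ y in Set.Iic d, ENNReal.ofReal (h y) ∂volume)
            + ∫⁻ y in (Set.Iic d)ᶜ, ENNReal.ofReal (h y) ∂volume :=
          (lintegral_add_compl _ measurableSet_Iic).symm
        _ = ∫⁻ y in Set.Ioi d, ENNReal.ofReal (h y) ∂volume := by
          rw [hzero, Set.compl_Iic, zero_add]
        _ = ENNReal.ofReal (∫ y in Set.Ioi d, h y) :=
          (ofReal_integral_eq_lintegral_ofReal hI hnn).symm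
        _ = ENNReal.ofReal (Real.log (1 / min d 1)) := by
          rw [hvalI, min_eq_left hd1.le]
    · -- case 1 ≤ d : the intersection is empty
      have hSempty : S = ∅ := by
        ext ⟨x1, y⟩
        simp only [Set.mem_empty_iff_false, iff_false]
        rintro ⟨hA, hB⟩
        rw [hyp_mem_htrans] at hA hB
        have hm : min y 1 ≤ 1 := min_le_right _ _
        have := htri x1
        linarith
      rw [hSempty, min_eq_right hd1]
      simp
  refine ⟨?_, hval⟩
  -- the truncated measures are eventually constant
  refine Filter.Tendsto.congr' ?_ tendsto_const_nhds
  filter_upwards [Ioo_mem_nhdsGT_of_mem (show (0:ℝ) ∈ Set.Ico 0 d from ⟨le_refl _, hd⟩)]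
    with ε hε
  have : S ∩ {p : ℝ × ℝ | ε < p.2} = S :=
    Set.inter_eq_self_of_subset_left fun p hp => hε.2.trans (hsub hp)
  rw [this]
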